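/- Let ℓ, c ∈ ℕ and n = ℓ·c + 1. Let G be the directed labelled graph of dimension 1 with nodes v_{−n},…,v_n, edge relation E = {(v_i,v_j) : −n ≤ i < j ≤ n}, and all labels 0, and let G' have the same nodes and labels and edge relation E' = (E ∖ {(v_{−1},v_1)}) ∪ {(v_1,v_{−1})}. Then the edge relation of G is a strict linear order, the edge relation of G' is not a strict linear order, and for every i ∈ {−n,…,n}, W^ℓ_c(v_i) computed in G equals W^ℓ_c(v_i) computed in G'. -/

import Mathlib

/-- The multiset `⟦f w : w ∈ V, p w⟧` of values of `f` on the elements satisfying `p`. -/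
noncomputable def msetOf {V α : Type} [Fintype V] (p : V → Prop) (f : V → α) : Multiset α :=
  letI := Classical.decPred p
  ((Finset.univ.filter p).val.map f)

/-- Truncate every multiplicity in a multiset to at most `c` (the `c`-bounded multiset). -/
noncomputable def trunc {α : Type} (c : ℕ) (M : Multiset α) : Multiset α :=
  letI := Classical.decEq α
  M.toFinset.val.bind fun a => Multiset.replicate (min c (M.count a)) a

/-- The type of colours of the (bounded) Weisfeiler–Leman algorithm after `ℓ` rounds, for
graphs of dimension `d`: a colour of round `ℓ+1` is a tuple of a colour of round `ℓ`
and four multisets of colours of round `ℓ`. -/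
def WLC (d : ℕ) : ℕ → Type
  | 0 => Fin d → Bool
  | (ℓ+1) => WLC d ℓ × Multiset (WLC d ℓ) × Multiset (WLC d ℓ) × Multiset (WLC d ℓ) ×
      Multiset (WLC d ℓ)

/-- The `c`-bounded Weisfeiler–Leman colouring `W^ℓ_c` on the directed labelled graph
`(V, E, lab)`:  `W^0_c(v) = lab v` and `W^{ℓ+1}_c(v)` is the tuple of `W^ℓ_c(v)` and the
`c`-bounded multisets of the previous colours over `←N(v)∩→N(v)`, `←N(v)∖→N(v)`,
`→N(v)∖←N(v)` and `V∖(N(v)∪{v})`. -/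
noncomputable def WL {d : ℕ} {V : Type} [Fintype V] (E : V → V → Prop)
    (lab : V → Fin d → Bool) (c : ℕ) : (ℓ : ℕ) → V → WLC d ℓ
  | 0, v => lab v
  | (ℓ+1), v =>
      (WL E lab c ℓ v,
       trunc c (msetOf (fun w => E w v ∧ E v w) (WL E lab c ℓ)),
       trunc c (msetOf (fun w => E w v ∧ ¬ E v w) (WL E lab c ℓ)),
       trunc c (msetOf (fun w => E v w ∧ ¬ E w v) (WL E lab c ℓ)),
       trunc c (msetOf (fun w => ¬ (E w v ∨ E v w) ∧ w ≠ v) (WL E lab c ℓ)))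

/-- A strict linear order on a type `V`. -/
def IsStrictLinearOrderRel {V : Type} (E : V → V → Prop) : Prop :=
  (∀ v, ¬ E v v) ∧ (∀ u v w, E u v → E v w → E u w) ∧ (∀ u v : V, u ≠ v → E u v ∨ E v u)

/-- The vertex set `{v_{-n}, …, v_n}`, identified with the integer interval `[-n, n]`. -/
abbrev IntNode (n : ℕ) : Type := {i : ℤ // i ∈ Finset.Icc (-(n : ℤ)) (n : ℤ)}

section WLHelpers

lemma count_trunc {α : Type} [inst : DecidableEq α] (c : ℕ) (M : Multiset α) (a : α) :
    (trunc c M).count a = min c (M.count a) := by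
  have hi : Classical.decEq α = inst := Subsingleton.elim _ _
  unfold trunc
  rw [hi, Multiset.count_bind]
  have h1 : ∀ b, Multiset.count a (Multiset.replicate (min c (M.count b)) b)
      = if b = a then min c (M.count a) else 0 := by
    intro b
    rcases eq_or_ne b a with rfl | h
    · simp [Multiset.count_replicate]
    · simp [Multiset.count_replicate, h]
  have h2 : (Multiset.map (fun b => Multiset.count a (Multiset.replicate (min c (M.count b)) b))
      M.toFinset.val).sum = ∑ b ∈ M.toFinset, if b = a then min c (M.count a) else 0 := by
    rw [Finset.sum]
    exact congrArg Multiset.sum (Multiset.map_congr rfl (fun b _ => h1 b))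
  rw [h2, Finset.sum_ite_eq' M.toFinset a (fun _ => min c (M.count a))]
  by_cases h : a ∈ M.toFinset
  · simp [h]
  · simp only [h, if_false]
    rw [Multiset.mem_toFinset] at h
    simp [Multiset.count_eq_zero_of_notMem h]

lemma trunc_eq_trunc {α : Type} [DecidableEq α] {c : ℕ} {M N : Multiset α}
    (h : ∀ a, min c (M.count a) = min c (N.count a)) : trunc c M = trunc c N := by
  ext a
  rw [count_trunc, count_trunc, h]

lemma count_msetOf {V α : Type} [Fintype V] [DecidableEq α] (p : V → Prop) (f : V → α) (a : α)
    [DecidablePred fun w => p w ∧ f w = a] :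
    (msetOf p f).count a
      = (Finset.univ.filter (fun w => p w ∧ f w = a)).card := by
  unfold msetOf
  rw [Multiset.count_map, Finset.card_def]
  apply congrArg Multiset.card
  rw [Finset.filter_val, Finset.filter_val, Multiset.filter_filter]
  letI := Classical.decPred p
  exact Multiset.filter_congr (fun w _ =>
    ⟨fun ⟨h1, h2⟩ => ⟨h2, h1.symm⟩, fun ⟨h1, h2⟩ => ⟨h2.symm, h1⟩⟩)

lemma msetOf_congr {V α : Type} [Fintype V] {p q : V → Prop} {f g : V → α}
    (hpq : ∀ w, p w ↔ q w) (hfg : ∀ w, p w → f w = g w) : msetOf p f = msetOf q g := by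
  unfold msetOf
  letI := Classical.decPred p
  letI := Classical.decPred q
  exact Multiset.map_congr
    (congrArg Finset.val (Finset.filter_congr fun w _ => hpq w))
    (fun w hw => hfg w ((hpq w).mpr (Finset.mem_filter.mp (Finset.mem_val.mp hw)).2))

lemma trunc_msetOf_eq {V α : Type} [Fintype V] [DecidableEq α] {c : ℕ}
    {p q : V → Prop} {f : V → α} {χ : α}
    (hsub : ∀ w, q w → p w) (hdiff : ∀ w, p w → ¬ q w → f w = χ)
    (hcount : c ≤ (msetOf q f).count χ) :
    trunc c (msetOf p f) = trunc c (msetOf q f) := by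
  apply trunc_eq_trunc
  intro a
  classical
  rcases eq_or_ne a χ with rfl | ha
  · have h1 : (msetOf q f).count a ≤ (msetOf p f).count a := by
      rw [count_msetOf, count_msetOf]
      apply Finset.card_le_card
      intro w hw
      rw [Finset.mem_filter] at hw ⊢
      exact ⟨hw.1, hsub w hw.2.1, hw.2.2⟩
    omega
  · have h1 : (msetOf p f).count a = (msetOf q f).count a := by
      rw [count_msetOf, count_msetOf]
      apply congrArg Finset.card
      apply Finset.filter_congr
      intro w _
      constructor
      · rintro ⟨h1, h2⟩
        refine ⟨?_, h2⟩
        by_contra hq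
        exact absurd (h2.symm.trans (hdiff w h1 hq)) ha
      · rintro ⟨h1, h2⟩; exact ⟨hsub w h1, h2⟩
    rw [h1]

lemma le_count_msetOf {n : ℕ} {α : Type} [DecidableEq α]
    {q : IntNode n → Prop} {f : IntNode n → α} {χ : α}
    (a b : ℤ) (ha : -(n:ℤ) ≤ a) (hb : b ≤ (n:ℤ))
    (h : ∀ w : IntNode n, a ≤ w.val → w.val ≤ b → q w ∧ f w = χ) :
    (b + 1 - a).toNat ≤ (msetOf q f).count χ := by
  classical
  rw [count_msetOf, ← Int.card_Icc]
  have hg : ∀ i : ℤ, max (-(n:ℤ)) (min (n:ℤ) i) ∈ Finset.Icc (-(n:ℤ)) (n:ℤ) := by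
    intro i; rw [Finset.mem_Icc]; omega
  apply Finset.card_le_card_of_injOn (fun i => (⟨max (-(n:ℤ)) (min (n:ℤ) i), hg i⟩ : IntNode n))
  · intro i hi
    rw [Finset.coe_Icc, Set.mem_Icc] at hi
    have hv : max (-(n:ℤ)) (min (n:ℤ) i) = i := by omega
    rw [Finset.mem_coe, Finset.mem_filter]
    refine ⟨Finset.mem_univ _, ?_⟩
    exact h ⟨max (-(n:ℤ)) (min (n:ℤ) i), hg i⟩ (by simp only [hv]; exact hi.1)
      (by simp only [hv]; exact hi.2)
  · intro i hi j hj hij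
    rw [Finset.coe_Icc, Set.mem_Icc] at hi hj
    have : max (-(n:ℤ)) (min (n:ℤ) i) = max (-(n:ℤ)) (min (n:ℤ) j) := congrArg Subtype.val hij
    omega

end WLHelpers

lemma colA {c n : ℕ} {E : IntNode n → IntNode n → Prop}
    (hE : ∀ i j : IntNode n, E i j ↔ i.val < j.val)
    {lab : IntNode n → Fin 1 → Bool} (hlab : ∀ v i, lab v i = false) :
    ∀ k : ℕ, ∀ i j : IntNode n,
      -((n:ℤ) - k * c) ≤ i.val → i.val ≤ (n:ℤ) - k * c →
      -((n:ℤ) - k * c) ≤ j.val → j.val ≤ (n:ℤ) - k * c →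
      WL E lab c k i = WL E lab c k j := by
  classical
  intro k
  induction k with
  | zero =>
    intro i j _ _ _ _
    show lab i = lab j
    funext t; rw [hlab, hlab]
  | succ k IH =>
    -- wlog version
    have key : ∀ i j : IntNode n, i.val ≤ j.val →
        -((n:ℤ) - (k+1) * c) ≤ i.val → i.val ≤ (n:ℤ) - (k+1) * c →
        -((n:ℤ) - (k+1) * c) ≤ j.val → j.val ≤ (n:ℤ) - (k+1) * c →
        WL E lab c (k+1) i = WL E lab c (k+1) j := by
      intro i j hij hi1 hi2 hj1 hj2
      set m : ℤ := (n:ℤ) - k * c with hm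
      have hstep : ((n:ℤ) - (k+1) * c) = m - c := by ring
      rw [hstep] at hi1 hi2 hj1 hj2
      have hc0 : (0:ℤ) ≤ c := Int.natCast_nonneg c
      have hkc : (0:ℤ) ≤ (k:ℤ) * c := by positivity
      have hmn : m ≤ (n:ℤ) := by rw [hm]; linarith
      have hiIcc := Finset.mem_Icc.mp i.2
      have hjIcc := Finset.mem_Icc.mp j.2
      -- arithmetic versions of the four neighbourhood multisets, at any v
      have conv1 : ∀ v : IntNode n, msetOf (fun w => E w v ∧ E v w) (WL E lab c k)
          = msetOf (fun _ => False) (WL E lab c k) :=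
        fun v => msetOf_congr (fun w => by rw [hE, hE]; exact iff_false_intro (by omega))
          (fun _ _ => rfl)
      have conv2 : ∀ v : IntNode n, msetOf (fun w => E w v ∧ ¬ E v w) (WL E lab c k)
          = msetOf (fun w => w.val < v.val) (WL E lab c k) :=
        fun v => msetOf_congr (fun w => by rw [hE, hE]; omega) (fun _ _ => rfl)
      have conv3 : ∀ v : IntNode n, msetOf (fun w => E v w ∧ ¬ E w v) (WL E lab c k)
          = msetOf (fun w => v.val < w.val) (WL E lab c k) :=
        fun v => msetOf_congr (fun w => by rw [hE, hE]; omega) (fun _ _ => rfl)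
      have conv4 : ∀ v : IntNode n, msetOf (fun w => ¬ (E w v ∨ E v w) ∧ w ≠ v) (WL E lab c k)
          = msetOf (fun _ => False) (WL E lab c k) :=
        fun v => msetOf_congr (fun w => by
          rw [hE, hE]
          exact ⟨fun h => h.2 (Subtype.ext (by omega)), False.elim⟩) (fun _ _ => rfl)
      show (WL E lab c k i, _, _, _, _) = (WL E lab c k j, _, _, _, _)
      simp only [Prod.mk.injEq]
      refine ⟨?_, ?_, ?_, ?_, ?_⟩
      · exact IH i j (by omega) (by omega) (by omega) (by omega)
      · rw [conv1, conv1]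
      · rw [conv2 i, conv2 j]
        refine (trunc_msetOf_eq (χ := WL E lab c k i)
          (fun w hw => by omega)
          (fun w h1 h2 => IH w i (by omega) (by omega) (by omega) (by omega)) ?_).symm
        calc c ≤ ((i.val - 1) + 1 - (-m)).toNat := by omega
          _ ≤ _ := le_count_msetOf (-m) (i.val - 1) (by omega) (by omega)
            (fun w hw1 hw2 => ⟨by omega, IH w i (by omega) (by omega) (by omega) (by omega)⟩)
      · rw [conv3 i, conv3 j]
        refine trunc_msetOf_eq (χ := WL E lab c k j)
          (fun w hw => by omega)
          (fun w h1 h2 => IH w j (by omega) (by omega) (by omega) (by omega)) ?_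
        calc c ≤ (m + 1 - (j.val + 1)).toNat := by omega
          _ ≤ _ := le_count_msetOf (j.val + 1) m (by omega) (by omega)
            (fun w hw1 hw2 => ⟨by omega, IH w j (by omega) (by omega) (by omega) (by omega)⟩)
      · rw [conv4, conv4]
    intro i j hi1 hi2 hj1 hj2
    rcases le_total i.val j.val with h | h
    · exact key i j h hi1 hi2 hj1 hj2
    · exact (key j i h hj1 hj2 hi1 hi2).symm

lemma colB (ℓ c n : ℕ) (hn : n = ℓ * c + 1)
    {E E' : IntNode n → IntNode n → Prop}
    (hE : ∀ i j : IntNode n, E i j ↔ i.val < j.val)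
    (hE' : ∀ i j : IntNode n, E' i j ↔
      ((i.val < j.val ∧ ¬ (i.val = -1 ∧ j.val = 1)) ∨ (i.val = 1 ∧ j.val = -1)))
    {lab : IntNode n → Fin 1 → Bool} (hlab : ∀ v i, lab v i = false) :
    ∀ k : ℕ, k ≤ ℓ → ∀ v : IntNode n, WL E lab c k v = WL E' lab c k v := by
  classical
  have hn1 : 1 ≤ n := by rw [hn]; exact Nat.succ_le_succ (Nat.zero_le _)
  have hmem1 : (1:ℤ) ∈ Finset.Icc (-(n:ℤ)) (n:ℤ) := by
    rw [Finset.mem_Icc]; constructor <;> [omega; exact_mod_cast hn1]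
  have hmemm1 : (-1:ℤ) ∈ Finset.Icc (-(n:ℤ)) (n:ℤ) := by
    rw [Finset.mem_Icc]
    have : (1:ℤ) ≤ n := by exact_mod_cast hn1
    omega
  set v1 : IntNode n := ⟨1, hmem1⟩ with hv1def
  set vm1 : IntNode n := ⟨-1, hmemm1⟩ with hvm1def
  have hv1val : v1.val = 1 := rfl
  have hvm1val : vm1.val = -1 := rfl
  intro k
  induction k with
  | zero => intro _ v; rfl
  | succ k IH =>
    intro hk v
    have IHk : ∀ w, WL E lab c k w = WL E' lab c k w := IH (Nat.le_of_succ_le hk)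
    set m : ℤ := (n:ℤ) - k * c with hm
    have hbig : (c:ℤ) + 1 ≤ m := by
      have h1 : (k:ℤ) + 1 ≤ (ℓ:ℤ) := by exact_mod_cast hk
      have h2 : ((k:ℤ) + 1) * c ≤ (ℓ:ℤ) * c :=
        mul_le_mul_of_nonneg_right h1 (Int.natCast_nonneg c)
      have h3 : (n:ℤ) = (ℓ:ℤ) * c + 1 := by exact_mod_cast congrArg (Nat.cast : ℕ → ℤ) hn
      have h4 : ((k:ℤ) + 1) * c = (k:ℤ) * c + c := by ring
      rw [hm]; linarith
    have hkc : (0:ℤ) ≤ (k:ℤ) * c := by positivity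
    have hmn : m ≤ (n:ℤ) := by rw [hm]; linarith
    -- colour equality on the middle block at round k
    have A := colA (c := c) hE hlab k
    have Am : ∀ i j : IntNode n, -m ≤ i.val → i.val ≤ m → -m ≤ j.val → j.val ≤ m →
        WL E lab c k i = WL E lab c k j := by
      intro i j h1 h2 h3 h4
      exact A i j (by rw [hm] at h1; omega) (by rw [hm] at h2; omega)
        (by rw [hm] at h3; omega) (by rw [hm] at h4; omega)
    -- swap colour function in E'-multisets
    have hfswap : ∀ p : IntNode n → Prop,
        msetOf p (WL E' lab c k) = msetOf p (WL E lab c k) :=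
      fun p => msetOf_congr (fun _ => Iff.rfl) (fun w _ => (IHk w).symm)
    simp only [WL]
    refine Prod.ext (IHk v) (Prod.ext ?_ (Prod.ext ?_ (Prod.ext ?_ ?_)))
    -- mutual edges: empty in both graphs
    · show trunc c (msetOf (fun w => E w v ∧ E v w) (WL E lab c k))
        = trunc c (msetOf (fun w => E' w v ∧ E' v w) (WL E' lab c k))
      rw [hfswap]
      apply congrArg (trunc c)
      apply msetOf_congr (q := fun w => E' w v ∧ E' v w) _ (fun _ _ => rfl)
      intro w
      show (E w v ∧ E v w) ↔ (E' w v ∧ E' v w)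
      rw [hE, hE, hE', hE']
      have hwI := Finset.mem_Icc.mp w.2
      have hvI := Finset.mem_Icc.mp v.2
      omega
    -- in-neighbours
    · show trunc c (msetOf (fun w => E w v ∧ ¬ E v w) (WL E lab c k))
        = trunc c (msetOf (fun w => E' w v ∧ ¬ E' v w) (WL E' lab c k))
      rw [hfswap]
      rcases eq_or_ne v.val 1 with hv | hv
      · refine trunc_msetOf_eq (χ := WL E lab c k vm1) ?_ ?_ ?_
        · intro w hw
          rw [hE', hE'] at hw
          rw [hE, hE]
          omega
        · intro w h1 h2
          rw [hE, hE] at h1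
          rw [hE', hE'] at h2
          have hw : w.val = -1 := by omega
          have : w = vm1 := Subtype.ext (by rw [hw])
          rw [this]
        · calc c ≤ ((-2 : ℤ) + 1 - (-m)).toNat := by omega
            _ ≤ _ := le_count_msetOf (-m) (-2) (by omega) (by omega) (by
              intro w hw1 hw2
              refine ⟨?_, Am w vm1 hw1 (by omega) (by omega) (by omega)⟩
              rw [hE', hE']
              omega)
      rcases eq_or_ne v.val (-1) with hv' | hv'
      · refine (trunc_msetOf_eq (χ := WL E lab c k v1) ?_ ?_ ?_).symm
        · intro w hw
          rw [hE, hE] at hw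
          rw [hE', hE']
          omega
        · intro w h1 h2
          rw [hE', hE'] at h1
          rw [hE, hE] at h2
          have hw : w.val = 1 := by omega
          have : w = v1 := Subtype.ext (by rw [hw])
          rw [this]
        · calc c ≤ ((-2 : ℤ) + 1 - (-m)).toNat := by omega
            _ ≤ _ := le_count_msetOf (-m) (-2) (by omega) (by omega) (by
              intro w hw1 hw2
              refine ⟨?_, Am w v1 hw1 (by omega) (by omega) (by omega)⟩
              rw [hE, hE]
              omega)
      · apply congrArg (trunc c)
        apply msetOf_congr _ (fun _ _ => rfl)
        intro w
        show (E w v ∧ ¬ E v w) ↔ (E' w v ∧ ¬ E' v w)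
        rw [hE, hE, hE', hE']
        omega
    -- out-neighbours
    · show trunc c (msetOf (fun w => E v w ∧ ¬ E w v) (WL E lab c k))
        = trunc c (msetOf (fun w => E' v w ∧ ¬ E' w v) (WL E' lab c k))
      rw [hfswap]
      rcases eq_or_ne v.val 1 with hv | hv
      · refine (trunc_msetOf_eq (χ := WL E lab c k vm1) ?_ ?_ ?_).symm
        · intro w hw
          rw [hE, hE] at hw
          rw [hE', hE']
          omega
        · intro w h1 h2
          rw [hE', hE'] at h1
          rw [hE, hE] at h2
          have hw : w.val = -1 := by omega
          have : w = vm1 := Subtype.ext (by rw [hw])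
          rw [this]
        · calc c ≤ (m + 1 - 2).toNat := by omega
            _ ≤ _ := le_count_msetOf 2 m (by omega) (by omega) (by
              intro w hw1 hw2
              refine ⟨?_, Am w vm1 (by omega) hw2 (by omega) (by omega)⟩
              rw [hE, hE]
              omega)
      rcases eq_or_ne v.val (-1) with hv' | hv'
      · refine trunc_msetOf_eq (χ := WL E lab c k v1) ?_ ?_ ?_
        · intro w hw
          rw [hE', hE'] at hw
          rw [hE, hE]
          omega
        · intro w h1 h2
          rw [hE, hE] at h1
          rw [hE', hE'] at h2
          have hw : w.val = 1 := by omega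
          have : w = v1 := Subtype.ext (by rw [hw])
          rw [this]
        · calc c ≤ (m + 1 - 2).toNat := by omega
            _ ≤ _ := le_count_msetOf 2 m (by omega) (by omega) (by
              intro w hw1 hw2
              refine ⟨?_, Am w v1 (by omega) hw2 (by omega) (by omega)⟩
              rw [hE', hE']
              omega)
      · apply congrArg (trunc c)
        apply msetOf_congr _ (fun _ _ => rfl)
        intro w
        show (E v w ∧ ¬ E w v) ↔ (E' v w ∧ ¬ E' w v)
        rw [hE, hE, hE', hE']
        omega
    -- non-neighbours: empty in both graphs
    · show trunc c (msetOf (fun w => ¬ (E w v ∨ E v w) ∧ w ≠ v) (WL E lab c k))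
        = trunc c (msetOf (fun w => ¬ (E' w v ∨ E' v w) ∧ w ≠ v) (WL E' lab c k))
      rw [hfswap]
      apply congrArg (trunc c)
      apply msetOf_congr _ (fun _ _ => rfl)
      intro w
      show (¬ (E w v ∨ E v w) ∧ w ≠ v) ↔ (¬ (E' w v ∨ E' v w) ∧ w ≠ v)
      rw [hE, hE, hE', hE']
      constructor
      · rintro ⟨h1, h2⟩
        exact absurd (Subtype.ext (show w.val = v.val by omega)) h2
      · rintro ⟨h1, h2⟩
        exact absurd (Subtype.ext (show w.val = v.val by omega)) h2


/-- with `n = ℓ·c+1`, the linear order `G` on `v_{-n},…,v_n` (edges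
`(v_i,v_j)` for `i<j`, all labels `0`) and the graph `G'` obtained by replacing the edge
`(v_{-1},v_1)` with `(v_1,v_{-1})` satisfy: `G` is a strict linear order, `G'` is not, and
every node gets the same `c`-bounded WL colour after `ℓ` rounds in `G` and in `G'`. -/

theorem stmt7 (ℓ c n : ℕ) (hn : n = ℓ * c + 1)
    (E E' : IntNode n → IntNode n → Prop)
    (hE : ∀ i j : IntNode n, E i j ↔ i.val < j.val)
    (hE' : ∀ i j : IntNode n, E' i j ↔
      ((i.val < j.val ∧ ¬ (i.val = -1 ∧ j.val = 1)) ∨ (i.val = 1 ∧ j.val = -1)))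
    (lab : IntNode n → Fin 1 → Bool) (hlab : ∀ v i, lab v i = false) :
    IsStrictLinearOrderRel E ∧ ¬ IsStrictLinearOrderRel E' ∧
      ∀ v : IntNode n, WL E lab c ℓ v = WL E' lab c ℓ v := by
  have hn1 : 1 ≤ n := by rw [hn]; exact Nat.succ_le_succ (Nat.zero_le _)
  have hn1' : (1:ℤ) ≤ (n:ℤ) := by exact_mod_cast hn1
  have hmem1 : (1:ℤ) ∈ Finset.Icc (-(n:ℤ)) (n:ℤ) := by rw [Finset.mem_Icc]; omega
  have hmemm1 : (-1:ℤ) ∈ Finset.Icc (-(n:ℤ)) (n:ℤ) := by rw [Finset.mem_Icc]; omega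
  have hmem0 : (0:ℤ) ∈ Finset.Icc (-(n:ℤ)) (n:ℤ) := by rw [Finset.mem_Icc]; omega
  refine ⟨⟨?_, ?_, ?_⟩, ?_, ?_⟩
  · intro v hv
    rw [hE] at hv
    omega
  · intro u v w h1 h2
    rw [hE] at h1 h2 ⊢
    omega
  · intro u v huv
    have : u.val ≠ v.val := fun he => huv (Subtype.ext he)
    rw [hE, hE]
    omega
  · rintro ⟨hirr, htr, htot⟩
    have h1 : E' ⟨1, hmem1⟩ ⟨-1, hmemm1⟩ := (hE' _ _).mpr (Or.inr ⟨rfl, rfl⟩)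
    have h2 : E' ⟨-1, hmemm1⟩ ⟨0, hmem0⟩ := (hE' _ _).mpr
      (Or.inl ⟨by norm_num, by rintro ⟨_, h⟩; exact absurd h (by norm_num)⟩)
    have h3 := (hE' _ _).mp (htr _ _ _ h1 h2)
    simp only at h3
    omega
  · exact fun v => colB ℓ c n hn hE hE' hlab ℓ le_rfl v
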